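/- Let A = {a,b} and define f: A* → S as follows: given a word w of length n, f(w) is the permutation of {1,…,n+1} obtained by reading w left to right, where at step i (1 ≤ i ≤ n) the entry f(w)(i) is the smallest element of {1,…,n+1} not yet used if w(i) = a, and the largest element not yet used if w(i) = b, and f(w)(n+1) is the single remaining element. Then f is an order isomorphism from the poset A* under factor order to the subposet of the consecutive pattern poset consisting of all permutations that avoid the classical patterns 213 and 231. -/

import Mathlib

/-- Standardization of a list of distinct naturals: replace each entry by its rank
(the number of entries less than or equal to it). -/
def stdize (s : List ℕ) : List ℕ := s.map (fun x => (s.filter (· ≤ x)).length)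

/-- All contiguous subwords (infixes) of a list. -/
def infixes (l : List ℕ) : List (List ℕ) := l.inits.flatMap List.tails

/-- `l` is a permutation of `{1,…,d}` where `d = l.length ≥ 1`; these are the
elements of the consecutive pattern poset. -/
def IsPermList (l : List ℕ) : Prop := l ≠ [] ∧ l.Perm (List.range' 1 l.length)

/-- Consecutive pattern containment: `σ ≤ τ` iff `σ` is the standardization of
some contiguous subsequence of `τ`. -/
def PattLE (σ τ : List ℕ) : Prop := σ ∈ (infixes τ).map stdize

instance (σ τ : List ℕ) : Decidable (PattLE σ τ) :=
  inferInstanceAs (Decidable (σ ∈ (infixes τ).map stdize))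

/-- A permutation is monotone if its letters strictly increase or strictly decrease. -/
def MonotoneList (l : List ℕ) : Prop := l.Chain' (· < ·) ∨ l.Chain' (· > ·)

/-- The interior `i(τ)`: standardization of `τ` with first and last letters removed. -/
def pattInterior (τ : List ℕ) : List ℕ := stdize τ.tail.dropLast

/-- Length of the longest proper prefix of `τ` whose standardization is also the
standardization of a suffix of `τ`. -/
def extLen (τ : List ℕ) : ℕ :=
  Nat.findGreatest (fun k => stdize (τ.take k) = stdize (τ.drop (τ.length - k))) (τ.length - 1)

/-- The exterior `x(τ)`: the longest permutation that is both a proper prefix and a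
suffix of `τ`. -/
def pattExterior (τ : List ℕ) : List ℕ := stdize (τ.take (extLen τ))

/-- The closed interval `[σ,τ]` in the consecutive pattern poset, as a `Finset`. -/
def pattInterval (σ τ : List ℕ) : Finset (List ℕ) :=
  ((infixes τ).map stdize).toFinset.filter (fun z => PattLE σ z)

/-- The open interval `(σ,τ)` in the consecutive pattern poset, as a `Finset`. -/
def openPattInterval (σ τ : List ℕ) : Finset (List ℕ) :=
  ((infixes τ).map stdize).toFinset.filter (fun z => PattLE σ z ∧ z ≠ σ ∧ z ≠ τ)

/-- `τ` covers `σ` in the consecutive pattern poset: `σ < τ` and no element lies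
strictly between them. -/
def CoveredBy (σ τ : List ℕ) : Prop :=
  PattLE σ τ ∧ σ ≠ τ ∧ ¬ ∃ ρ, IsPermList ρ ∧ PattLE σ ρ ∧ PattLE ρ τ ∧ ρ ≠ σ ∧ ρ ≠ τ

/-- `c` is a maximal chain of the interval `[σ,τ]`: it starts at `τ`, ends at `σ`,
and each element covers the next. -/
def IsMaxChainPatt (σ τ : List ℕ) (c : List (List ℕ)) : Prop :=
  c.head? = some τ ∧ c.getLast? = some σ ∧ c.Chain' (fun a b => CoveredBy b a)

/-- Classical pattern containment: `π` occurs as the standardization of some (not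
necessarily consecutive) subsequence of `σ`. -/
def ClassLE (π σ : List ℕ) : Prop := π ∈ σ.sublists.map stdize

/-- `σ` avoids the classical patterns 213 and 231. -/
def AvoidsBoth (σ : List ℕ) : Prop := ¬ ClassLE [2,1,3] σ ∧ ¬ ClassLE [2,3,1] σ

/-- Auxiliary construction: read the word left to right, at each letter taking the
smallest remaining value (`false`, i.e. `a`) or the largest remaining value
(`true`, i.e. `b`) from the interval `{lo,…,hi}` of unused values; the single
remaining value is appended at the end. -/
def wordToPermAux : List Bool → ℕ → ℕ → List ℕ
  | [], lo, _ => [lo]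
  | (x :: rest), lo, hi =>
      if x then hi :: wordToPermAux rest lo (hi - 1)
      else lo :: wordToPermAux rest (lo + 1) hi

/-- The map `f` from words over `{a,b}` (here `a = false`, `b = true`) to
permutations: a word of length `n` is sent to a permutation of `{1,…,n+1}`. -/
def wordToPerm (w : List Bool) : List ℕ := wordToPermAux w 1 (w.length + 1)

lemma aux_nil (lo hi : ℕ) : wordToPermAux [] lo hi = [lo] := rfl
lemma aux_cons_false (rest : List Bool) (lo hi : ℕ) :
    wordToPermAux (false :: rest) lo hi = lo :: wordToPermAux rest (lo + 1) hi := rfl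
lemma aux_cons_true (rest : List Bool) (lo hi : ℕ) :
    wordToPermAux (true :: rest) lo hi = hi :: wordToPermAux rest lo (hi - 1) := rfl

lemma aux_length (w : List Bool) : ∀ lo hi, (wordToPermAux w lo hi).length = w.length + 1 := by
  induction w with
  | nil => intro lo hi; rfl
  | cons x rest ih =>
    intro lo hi
    cases x <;> simp [aux_cons_false, aux_cons_true, ih]

lemma aux_perm (w : List Bool) : ∀ lo, (wordToPermAux w lo (lo + w.length)).Perm (List.range' lo (w.length + 1)) := by
  induction w with
  | nil => intro lo; simp [aux_nil]
  | cons x rest ih =>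
    intro lo
    cases x
    · have e1 : lo + (false :: rest).length = (lo + 1) + rest.length := by simp; omega
      rw [e1, aux_cons_false]
      have hr : List.range' lo ((false :: rest).length + 1)
          = lo :: List.range' (lo+1) (rest.length + 1) := by
        rw [List.length_cons, List.range'_succ]
      rw [hr]
      exact (ih (lo + 1)).cons lo
    · have e1 : lo + (true :: rest).length = (lo + rest.length) + 1 := by simp; omega
      rw [e1, aux_cons_true, Nat.add_sub_cancel]
      have hr : List.range' lo ((true :: rest).length + 1)
          = List.range' lo (rest.length + 1) ++ [lo + rest.length + 1] := by
        rw [List.length_cons]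
        have := List.range'_concat (step := 1) (s := lo) (n := rest.length + 1)
        simpa [Nat.add_assoc] using this
      rw [hr]
      refine List.Perm.trans ?_ List.perm_middle.symm
      simpa using ((ih lo).cons (lo + rest.length + 1))

lemma aux_mem_bounds {w : List Bool} {lo y : ℕ} (h : y ∈ wordToPermAux w lo (lo + w.length)) :
    lo ≤ y ∧ y ≤ lo + w.length := by
  have := (aux_perm w lo).mem_iff.mp h
  rw [List.mem_range'] at this
  obtain ⟨i, hi, rfl⟩ := this
  omega

lemma aux_nodup (w : List Bool) (lo : ℕ) : (wordToPermAux w lo (lo + w.length)).Nodup :=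
  (aux_perm w lo).nodup_iff.mpr (List.nodup_range' _)

lemma aux_cmp (w : List Bool) : ∀ lo i j, (hij : i < j) → (hj : j ≤ w.length) →
    ((wordToPermAux w lo (lo + w.length))[i]'(by rw [aux_length]; omega)
     < (wordToPermAux w lo (lo + w.length))[j]'(by rw [aux_length]; omega)
     ↔ w[i]'(by omega) = false) := by
  induction w with
  | nil => intro lo i j hij hj; simp at hj; omega
  | cons x rest ih =>
    intro lo i j hij hj
    obtain ⟨j', rfl⟩ : ∃ j', j = j' + 1 := ⟨j - 1, by omega⟩
    cases x
    · have e1 : lo + (false :: rest).length = (lo + 1) + rest.length := by simp; omega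
      simp only [e1, aux_cons_false]
      cases i with
      | zero =>
        simp only [List.getElem_cons_zero, List.getElem_cons_succ]
        have hmem : (wordToPermAux rest (lo+1) ((lo+1) + rest.length))[j']'(by rw [aux_length]; simp at hj; omega)
            ∈ wordToPermAux rest (lo+1) ((lo+1) + rest.length) := List.getElem_mem _
        have := aux_mem_bounds hmem
        simpa using by omega
      | succ i' =>
        simp only [List.getElem_cons_succ]
        exact ih (lo+1) i' j' (by omega) (by simp at hj; omega)
    · have e1 : lo + (true :: rest).length = (lo + rest.length) + 1 := by simp; omega
      simp only [e1, aux_cons_true, Nat.add_sub_cancel]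
      cases i with
      | zero =>
        simp only [List.getElem_cons_zero, List.getElem_cons_succ]
        have hmem : (wordToPermAux rest lo (lo + rest.length))[j']'(by rw [aux_length]; simp at hj; omega)
            ∈ wordToPermAux rest lo (lo + rest.length) := List.getElem_mem _
        have := aux_mem_bounds hmem
        simpa using by omega
      | succ i' =>
        simp only [List.getElem_cons_succ]
        exact ih lo i' j' (by omega) (by simp at hj; omega)

lemma stdize_length (s : List ℕ) : (stdize s).length = s.length := List.length_map _

lemma filter_length_congr : ∀ (s t : List ℕ) (a b : ℕ), (hl : s.length = t.length) →
    (∀ k (hk : k < s.length), (s[k] ≤ a ↔ t[k]'(hl ▸ hk) ≤ b)) →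
    (s.filter (· ≤ a)).length = (t.filter (· ≤ b)).length := by
  intro s
  induction s with
  | nil =>
    intro t a b hl _
    have : t = [] := List.length_eq_zero_iff.mp hl.symm
    subst this; rfl
  | cons x s' ih =>
    intro t a b hl hspec
    match t, hl with
    | y :: t', hl =>
      have h0 := hspec 0 (by simp)
      simp only [List.getElem_cons_zero] at h0
      have hrest := ih t' a b (by simpa using hl) (fun k hk => by
        have := hspec (k+1) (by simpa using Nat.succ_lt_succ hk)
        simpa using this)
      by_cases hxa : x ≤ a
      · have hyb : y ≤ b := h0.mp hxa
        simp [List.filter_cons, hxa, hyb, hrest]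
      · have hyb : ¬ y ≤ b := fun h => hxa (h0.mpr h)
        simp [List.filter_cons, hxa, hyb, hrest]

lemma stdize_eq_of_iso {s t : List ℕ} (hl : s.length = t.length)
    (hiso : ∀ i j (hi : i < s.length) (hj : j < s.length),
      (s[i] ≤ s[j] ↔ t[i]'(hl ▸ hi) ≤ t[j]'(hl ▸ hj))) : stdize s = stdize t := by
  apply List.ext_getElem (by simp [stdize, hl])
  intro n h1 h2
  have hn : n < s.length := by simpa [stdize] using h1
  simp only [stdize, List.getElem_map]
  exact filter_length_congr s t _ _ hl (fun k hk => hiso k n hk hn)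

lemma range'_filter_le (n v : ℕ) (h1 : 1 ≤ v) (h2 : v ≤ n) :
    ((List.range' 1 n).filter (· ≤ v)).length = v := by
  have hsplit : List.range' 1 n = List.range' 1 v ++ List.range' (1 + v) (n - v) := by
    have := List.range'_append (s := 1) (m := v) (n := n - v) (step := 1)
    simp only [one_mul] at this
    rw [show v + (n - v) = n by omega] at this
    exact this.symm
  rw [hsplit, List.filter_append]
  have hA : (List.range' 1 v).filter (· ≤ v) = List.range' 1 v := by
    apply List.filter_eq_self.mpr
    intro a ha
    rw [List.mem_range'] at ha
    obtain ⟨i, hi, rfl⟩ := ha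
    simpa using by omega
  have hB : (List.range' (1+v) (n-v)).filter (· ≤ v) = [] := by
    apply List.filter_eq_nil_iff.mpr
    intro a ha
    rw [List.mem_range'] at ha
    obtain ⟨i, hi, rfl⟩ := ha
    simpa using by omega
  rw [hA, hB]
  simp

lemma stdize_self {t : List ℕ} (hp : t.Perm (List.range' 1 t.length)) : stdize t = t := by
  apply List.ext_getElem (stdize_length t)
  intro n h1 h2
  simp only [stdize, List.getElem_map]
  have hmem : t[n] ∈ t := List.getElem_mem _
  have hbd : 1 ≤ t[n] ∧ t[n] ≤ t.length := by
    have := hp.mem_iff.mp hmem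
    rw [List.mem_range'] at this
    obtain ⟨i, hi, he⟩ := this
    omega
  have hperm := (hp.filter (· ≤ t[n])).length_eq
  rw [hperm, range'_filter_le _ _ hbd.1 hbd.2]

lemma wordToPerm_eq (w : List Bool) : wordToPerm w = wordToPermAux w 1 (1 + w.length) := by
  rw [wordToPerm, Nat.add_comm]

lemma wp_length (w : List Bool) : (wordToPerm w).length = w.length + 1 := by
  rw [wordToPerm_eq, aux_length]

lemma wp_perm (w : List Bool) : (wordToPerm w).Perm (List.range' 1 (w.length + 1)) := by
  rw [wordToPerm_eq]; exact aux_perm w 1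

lemma wp_nodup (w : List Bool) : (wordToPerm w).Nodup :=
  (wp_perm w).nodup_iff.mpr (List.nodup_range' _)

lemma wp_lt {w : List Bool} {i j : ℕ} (hij : i < j) (hj : j ≤ w.length) :
    ((wordToPerm w)[i]'(by rw [wp_length]; omega) < (wordToPerm w)[j]'(by rw [wp_length]; omega)
      ↔ w[i]'(by omega) = false) := by
  have := aux_cmp w 1 i j hij hj
  simpa [wordToPerm_eq] using this

lemma wp_le {w : List Bool} {i j : ℕ} (hij : i < j) (hj : j ≤ w.length) :
    ((wordToPerm w)[i]'(by rw [wp_length]; omega) ≤ (wordToPerm w)[j]'(by rw [wp_length]; omega)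
      ↔ w[i]'(by omega) = false) := by
  constructor
  · intro h
    by_contra hb
    have hne : (wordToPerm w)[i]'(by rw [wp_length]; omega) ≠ (wordToPerm w)[j]'(by rw [wp_length]; omega) := by
      intro he
      exact absurd ((wp_nodup w).getElem_inj_iff.mp he) (by omega)
    exact hb ((wp_lt hij hj).mp (lt_of_le_of_ne h hne))
  · intro h
    exact le_of_lt ((wp_lt hij hj).mpr h)

lemma wp_ge {w : List Bool} {i j : ℕ} (hij : i < j) (hj : j ≤ w.length) :
    ((wordToPerm w)[j]'(by rw [wp_length]; omega) ≤ (wordToPerm w)[i]'(by rw [wp_length]; omega)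
      ↔ w[i]'(by omega) = true) := by
  rw [← Nat.not_lt, wp_lt hij hj, Bool.not_eq_false]

lemma window (w : List Bool) (p m : ℕ) (hm : 1 ≤ m) (hpm : p + m ≤ w.length + 1) :
    stdize (((wordToPerm w).drop p).take m) = wordToPerm ((w.drop p).take (m-1)) := by
  set u := (w.drop p).take (m-1) with hu
  set s := ((wordToPerm w).drop p).take m with hs
  have hul : u.length = m - 1 := by
    rw [hu, List.length_take, List.length_drop]
    omega
  have hsl : s.length = m := by
    rw [hs, List.length_take, List.length_drop, wp_length]
    omega
  have htl : (wordToPerm u).length = m := by rw [wp_length, hul]; omega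
  have hstd : stdize (wordToPerm u) = wordToPerm u := by
    apply stdize_self
    rw [wp_length]
    exact wp_perm u
  rw [← hstd]
  apply stdize_eq_of_iso (by rw [hsl, htl])
  intro i j hi hj
  rw [hsl] at hi hj
  have hsi : ∀ k (hk : k < m), s[k]'(by omega) = (wordToPerm w)[p+k]'(by rw [wp_length]; omega) := by
    intro k hk
    simp only [hs, List.getElem_take, List.getElem_drop]
  have hui : ∀ k (hk : k < m - 1), u[k]'(by omega) = w[p+k]'(by omega) := by
    intro k hk
    simp only [hu, List.getElem_take, List.getElem_drop]
  rcases Nat.lt_trichotomy i j with hlt | heq | hgt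
  · rw [hsi i hi, hsi j hj]
    rw [wp_le (show p+i < p+j by omega) (show p+j ≤ w.length by omega)]
    rw [wp_le (show i < j by omega) (show j ≤ u.length by omega)]
    rw [hui i (by omega)]
  · subst heq; simp
  · rw [hsi i hi, hsi j hj]
    rw [wp_ge (show p+j < p+i by omega) (show p+i ≤ w.length by omega)]
    rw [wp_ge (show j < i by omega) (show i ≤ u.length by omega)]
    rw [hui j (by omega)]

lemma mem_infixes (x l : List ℕ) : x ∈ infixes l ↔ x <:+: l := by
  rw [infixes, List.mem_flatMap]
  constructor
  · rintro ⟨s, hs, hx⟩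
    rw [List.mem_inits] at hs
    rw [List.mem_tails] at hx
    exact hx.isInfix.trans hs.isInfix
  · rintro ⟨a, b, rfl⟩
    refine ⟨a ++ x, ?_, ?_⟩
    · rw [List.mem_inits]
      exact ⟨b, by simp⟩
    · rw [List.mem_tails]
      exact ⟨a, rfl⟩

lemma wp_inj : Function.Injective wordToPerm := by
  intro w w' he
  have hl : w.length = w'.length := by
    have := congrArg List.length he
    rw [wp_length, wp_length] at this
    omega
  apply List.ext_getElem hl
  intro n h1 h2
  have c1 := wp_lt (w := w) (i := n) (j := n+1) (by omega) (by omega)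
  have c2 := wp_lt (w := w') (i := n) (j := n+1) (by omega) (by omega)
  simp only [he] at c1
  rw [c2] at c1
  cases hw : w[n] <;> cases hw' : w'[n] <;> simp_all

lemma stdize_213 {x y z : ℕ} : stdize [x, y, z] = [2, 1, 3] ↔ y < x ∧ x < z := by
  simp only [stdize, List.map, ← List.countP_eq_length_filter, List.countP_cons,
    List.countP_nil, decide_eq_true_eq]
  split_ifs <;> simp_all <;> omega

lemma stdize_231 {x y z : ℕ} : stdize [x, y, z] = [2, 3, 1] ↔ z < x ∧ x < y := by
  simp only [stdize, List.map, ← List.countP_eq_length_filter, List.countP_cons,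
    List.countP_nil, decide_eq_true_eq]
  split_ifs <;> simp_all <;> omega

lemma classLE_iff {π σ : List ℕ} : ClassLE π σ ↔ ∃ s, s.Sublist σ ∧ stdize s = π := by
  simp [ClassLE, List.mem_map, List.mem_sublists]

lemma avoid_tail {h : ℕ} {t : List ℕ} (ha : AvoidsBoth (h :: t)) : AvoidsBoth t := by
  constructor <;> [skip; skip] <;>
  · intro hc
    rw [classLE_iff] at hc
    obtain ⟨s, hs, hstd⟩ := hc
    first
      | exact ha.1 (classLE_iff.mpr ⟨s, hs.trans (List.sublist_cons_self h t), hstd⟩)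
      | exact ha.2 (classLE_iff.mpr ⟨s, hs.trans (List.sublist_cons_self h t), hstd⟩)

lemma stdize_len_three {s : List ℕ} (h : stdize s = [2,1,3] ∨ stdize s = [2,3,1]) : s.length = 3 := by
  rcases h with h | h <;> · have := congrArg List.length h; rwa [stdize_length] at this

lemma avoid_cons_lt {h : ℕ} {t : List ℕ} (hlt : ∀ y ∈ t, h < y) (ha : AvoidsBoth t) :
    AvoidsBoth (h :: t) := by
  constructor
  · intro hc
    obtain ⟨s, hs, hstd⟩ := classLE_iff.mp hc
    have hlen : s.length = 3 := stdize_len_three (Or.inl hstd)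
    rcases List.sublist_cons_iff.mp hs with hsub | ⟨r, rfl, hr⟩
    · exact ha.1 (classLE_iff.mpr ⟨s, hsub, hstd⟩)
    · match r, (by simpa using hlen : r.length = 2) with
      | [y, z], _ =>
        have hy : y ∈ t := hr.subset (by simp)
        have := (stdize_213.mp hstd).1
        exact absurd (hlt y hy) (by omega)
  · intro hc
    obtain ⟨s, hs, hstd⟩ := classLE_iff.mp hc
    have hlen : s.length = 3 := stdize_len_three (Or.inr hstd)
    rcases List.sublist_cons_iff.mp hs with hsub | ⟨r, rfl, hr⟩
    · exact ha.2 (classLE_iff.mpr ⟨s, hsub, hstd⟩)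
    · match r, (by simpa using hlen : r.length = 2) with
      | [y, z], _ =>
        have hz : z ∈ t := hr.subset (by simp)
        have := (stdize_231.mp hstd).1
        exact absurd (hlt z hz) (by omega)

lemma avoid_cons_gt {h : ℕ} {t : List ℕ} (hgt : ∀ y ∈ t, y < h) (ha : AvoidsBoth t) :
    AvoidsBoth (h :: t) := by
  constructor
  · intro hc
    obtain ⟨s, hs, hstd⟩ := classLE_iff.mp hc
    have hlen : s.length = 3 := stdize_len_three (Or.inl hstd)
    rcases List.sublist_cons_iff.mp hs with hsub | ⟨r, rfl, hr⟩
    · exact ha.1 (classLE_iff.mpr ⟨s, hsub, hstd⟩)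
    · match r, (by simpa using hlen : r.length = 2) with
      | [y, z], _ =>
        have hz : z ∈ t := hr.subset (by simp)
        have := (stdize_213.mp hstd).2
        exact absurd (hgt z hz) (by omega)
  · intro hc
    obtain ⟨s, hs, hstd⟩ := classLE_iff.mp hc
    have hlen : s.length = 3 := stdize_len_three (Or.inr hstd)
    rcases List.sublist_cons_iff.mp hs with hsub | ⟨r, rfl, hr⟩
    · exact ha.2 (classLE_iff.mpr ⟨s, hsub, hstd⟩)
    · match r, (by simpa using hlen : r.length = 2) with
      | [y, z], _ =>
        have hy : y ∈ t := hr.subset (by simp)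
        have := (stdize_231.mp hstd).2
        exact absurd (hgt y hy) (by omega)

lemma avoid_singleton (a : ℕ) : AvoidsBoth [a] := by
  constructor <;>
  · intro hc
    obtain ⟨s, hs, hstd⟩ := classLE_iff.mp hc
    have hlen : s.length = 3 := stdize_len_three (by tauto)
    have := hs.length_le
    simp [hlen] at this

lemma aux_avoids (w : List Bool) : ∀ lo, AvoidsBoth (wordToPermAux w lo (lo + w.length)) := by
  induction w with
  | nil => intro lo; exact avoid_singleton lo
  | cons x rest ih =>
    intro lo
    cases x
    · have e1 : lo + (false :: rest).length = (lo + 1) + rest.length := by simp; omega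
      rw [e1, aux_cons_false]
      apply avoid_cons_lt
      · intro y hy
        have := aux_mem_bounds hy
        omega
      · exact ih (lo + 1)
    · have e1 : lo + (true :: rest).length = (lo + rest.length) + 1 := by simp; omega
      rw [e1, aux_cons_true, Nat.add_sub_cancel]
      apply avoid_cons_gt
      · intro y hy
        have := aux_mem_bounds hy
        omega
      · exact ih lo

lemma pair_sublist {a b : ℕ} {t : List ℕ} (ha : a ∈ t) (hb : b ∈ t) (hab : a ≠ b) :
    [a, b].Sublist t ∨ [b, a].Sublist t := by
  induction t with
  | nil => cases ha
  | cons c t' ih =>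
    by_cases hac : a = c
    · subst hac
      have hbt : b ∈ t' := by
        rcases List.mem_cons.mp hb with h | h
        · exact absurd h.symm hab
        · exact h
      exact Or.inl (List.cons_sublist_cons.mpr (List.singleton_sublist.mpr hbt))
    · by_cases hbc : b = c
      · subst hbc
        have hat : a ∈ t' := by
          rcases List.mem_cons.mp ha with h | h
          · exact absurd h hac
          · exact h
        exact Or.inr (List.cons_sublist_cons.mpr (List.singleton_sublist.mpr hat))
      · have hat : a ∈ t' := by
          rcases List.mem_cons.mp ha with h | h
          · exact absurd h hac
          · exact h
        have hbt : b ∈ t' := by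
          rcases List.mem_cons.mp hb with h | h
          · exact absurd h hbc
          · exact h
        exact (ih hat hbt).imp (fun h => h.cons c) (fun h => h.cons c)

lemma surj_aux : ∀ (n : ℕ) (σ : List ℕ) (lo : ℕ), σ.length = n → σ ≠ [] →
    σ.Perm (List.range' lo σ.length) → AvoidsBoth σ →
    ∃ w : List Bool, w.length + 1 = σ.length ∧ wordToPermAux w lo (lo + w.length) = σ := by
  intro n
  induction n with
  | zero => intro σ lo hlen hne _ _; exact absurd (List.length_eq_zero_iff.mp hlen) hne
  | succ n ih =>
    intro σ lo hlen hne hperm havd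
    match σ, hne with
    | h :: t, _ =>
      cases n with
      | zero =>
        have ht : t = [] := by simpa using hlen
        subst ht
        have : h = lo := by simpa using hperm
        subst this
        exact ⟨[], by simp, rfl⟩
      | succ n' =>
        have htlen : t.length = n' + 1 := by simpa using hlen
        have hsl : (h :: t).length = (n' + 1) + 1 := by simp [htlen]
        -- h is the min or the max
        have hminmax : h = lo ∨ h = lo + (n' + 1) := by
          by_contra hcon
          push_neg at hcon
          obtain ⟨hlo, hhi⟩ := hcon
          have hmemh : h ∈ List.range' lo ((h :: t).length) := hperm.subset (by simp)
          rw [List.mem_range'] at hmemh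
          obtain ⟨i, hi, hie⟩ := hmemh
          rw [hsl] at hi
          have hb1 : lo < h := by omega
          have hb2 : h < lo + (n' + 1) := by omega
          have hlomem : lo ∈ h :: t := by
            apply hperm.mem_iff.mpr
            rw [List.mem_range']
            exact ⟨0, by rw [hsl]; omega, by omega⟩
          have hhimem : lo + (n' + 1) ∈ h :: t := by
            apply hperm.mem_iff.mpr
            rw [List.mem_range']
            exact ⟨n' + 1, by rw [hsl]; omega, by omega⟩
          have hlot : lo ∈ t := by
            rcases List.mem_cons.mp hlomem with h1 | h1
            · omega
            · exact h1
          have hhit : lo + (n' + 1) ∈ t := by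
            rcases List.mem_cons.mp hhimem with h1 | h1
            · omega
            · exact h1
          rcases pair_sublist hlot hhit (by omega) with hp | hp
          · exact havd.1 (classLE_iff.mpr ⟨h :: [lo, lo + (n' + 1)],
              List.cons_sublist_cons.mpr hp, stdize_213.mpr ⟨hb1, hb2⟩⟩)
          · exact havd.2 (classLE_iff.mpr ⟨h :: [lo + (n' + 1), lo],
              List.cons_sublist_cons.mpr hp, stdize_231.mpr ⟨hb1, hb2⟩⟩)
        have havdt : AvoidsBoth t := avoid_tail havd
        rcases hminmax with hh | hh
        · -- head is min
          rw [hh] at hperm ⊢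
          have htperm : t.Perm (List.range' (lo + 1) t.length) := by
            have : List.range' lo ((lo :: t).length) = lo :: List.range' (lo + 1) t.length := by
              rw [List.length_cons, List.range'_succ]
            rw [this] at hperm
            exact hperm.cons_inv
          obtain ⟨w', hw'len, hw'⟩ := ih t (lo + 1) htlen (by simp [← List.length_pos_iff, htlen]) htperm havdt
          refine ⟨false :: w', by simp [← hw'len], ?_⟩
          have e1 : lo + (false :: w').length = (lo + 1) + w'.length := by simp; omega
          rw [e1, aux_cons_false, hw']
        · -- head is max
          subst hh
          have htperm : t.Perm (List.range' lo t.length) := by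
            have e : List.range' lo ((lo + (n' + 1)) :: t).length
                = List.range' lo (n' + 1) ++ [lo + (n' + 1)] := by
              rw [hsl]
              have := List.range'_concat (step := 1) (s := lo) (n := n' + 1)
              simpa [Nat.add_assoc] using this
            rw [e] at hperm
            have := hperm.trans (List.perm_middle (a := lo + (n' + 1)) (l₁ := List.range' lo (n' + 1)) (l₂ := []))
            rw [List.append_nil] at this
            rw [htlen]
            exact this.cons_inv
          obtain ⟨w', hw'len, hw'⟩ := ih t lo htlen (by simp [← List.length_pos_iff, htlen]) htperm havdt
          refine ⟨true :: w', by simp [← hw'len], ?_⟩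
          have hw'l : w'.length = n' := by omega
          have e1 : lo + (true :: w').length = (lo + w'.length) + 1 := by simp; omega
          rw [e1, aux_cons_true, Nat.add_sub_cancel, hw', hw'l]
          simp [Nat.add_assoc]

/-- `f` is an order isomorphism from `{a,b}*` under factor order onto the subposet
of the consecutive pattern poset consisting of the permutations avoiding the
classical patterns 213 and 231. -/
theorem wordToPerm_order_iso :
    (∀ w : List Bool, IsPermList (wordToPerm w) ∧ AvoidsBoth (wordToPerm w)) ∧
    Function.Injective wordToPerm ∧
    (∀ σ : List ℕ, IsPermList σ → AvoidsBoth σ → ∃ w : List Bool, wordToPerm w = σ) ∧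
    (∀ u w : List Bool, u <:+: w ↔ PattLE (wordToPerm u) (wordToPerm w)) := by
  refine ⟨?_, wp_inj, ?_, ?_⟩
  · intro w
    refine ⟨⟨?_, ?_⟩, ?_⟩
    · intro hnil
      have := wp_length w
      rw [hnil] at this
      simp at this
    · rw [wp_length]
      exact wp_perm w
    · rw [wordToPerm_eq]
      exact aux_avoids w 1
  · rintro σ ⟨hne, hperm⟩ havd
    obtain ⟨w, _, haux⟩ := surj_aux σ.length σ 1 rfl hne hperm havd
    exact ⟨w, by rw [wordToPerm_eq]; exact haux⟩
  · intro u w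
    constructor
    · rintro ⟨s, t2, hw⟩
      have hlw : w.length = s.length + u.length + t2.length := by
        rw [← hw]; simp; omega
      have hwin := window w s.length (u.length + 1) (by omega) (by omega)
      have hslice : (w.drop s.length).take (u.length + 1 - 1) = u := by
        have : w.drop s.length = u ++ t2 := by
          rw [← hw, List.append_assoc, List.drop_left]
        rw [this]
        simp [List.take_left]
      rw [hslice] at hwin
      rw [PattLE, List.mem_map]
      refine ⟨((wordToPerm w).drop s.length).take (u.length + 1), ?_, hwin⟩
      rw [mem_infixes]
      exact (List.take_prefix _ _).isInfix.trans (List.drop_suffix _ _).isInfix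
    · intro hp
      rw [PattLE, List.mem_map] at hp
      obtain ⟨z, hz, hstd⟩ := hp
      rw [mem_infixes] at hz
      obtain ⟨a, b, hab⟩ := hz
      have hzlen : z.length = u.length + 1 := by
        have := congrArg List.length hstd
        rw [stdize_length, wp_length] at this
        exact this
      have hlw : (wordToPerm w).length = a.length + z.length + b.length := by
        rw [← hab]; simp; omega
      rw [wp_length] at hlw
      have hzeq : z = ((wordToPerm w).drop a.length).take z.length := by
        have : (wordToPerm w).drop a.length = z ++ b := by
          rw [← hab, List.append_assoc, List.drop_left]
        rw [this, List.take_left]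
      have hwin := window w a.length z.length (by omega) (by omega)
      rw [← hzeq, hstd, hzlen] at hwin
      have := wp_inj hwin.symm
      rw [← this]
      exact (List.take_prefix _ _).isInfix.trans (List.drop_suffix _ _).isInfix
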